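/- Let G be a connected weighted graph with nonnegative edge weights, and let R be a bipartite subgraph of G such that every connected component of R is an induced subgraph of G. Then the maximum weight of a cut of G is at least (w(G) + w(R))/2, where w(H) denotes the total weight of edges of H. -/

import Mathlib

namespace MaxCut

/-- Weight of the cut induced by vertex set `A`: total weight of edges of `G`
with exactly one endpoint in `A`. -/
noncomputable def cutWeight {V : Type*} (G : SimpleGraph V) (w : Sym2 V → ℝ) (A : Set V) : ℝ :=
  ∑ᶠ e ∈ {e ∈ G.edgeSet | ∃ x y, e = s(x, y) ∧ x ∈ A ∧ y ∉ A}, w e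

/-- Total weight of the edges of `G`. -/
noncomputable def totalWeight {V : Type*} (G : SimpleGraph V) (w : Sym2 V → ℝ) : ℝ :=
  ∑ᶠ e ∈ G.edgeSet, w e

/-- Total weight of a set of edges. -/
noncomputable def setWeight {V : Type*} (w : Sym2 V → ℝ) (M : Set (Sym2 V)) : ℝ :=
  ∑ᶠ e ∈ M, w e

/-- `T` is a spanning tree of `G`. -/
def IsSpanningTree {V : Type*} (G T : SimpleGraph V) : Prop := T ≤ G ∧ T.IsTree

/-- `T` is a DFS tree of `G` rooted at `r`: a spanning tree such that every edge of `G`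
joins an ancestor–descendant pair (here `x` is an ancestor of `y` in the tree `T` rooted
at `r` iff `x` lies on the unique `r`–`y` path, equivalently
`T.dist r x + T.dist x y = T.dist r y`). -/
def IsDFSTree {V : Type*} (G T : SimpleGraph V) (r : V) : Prop :=
  T ≤ G ∧ T.IsTree ∧ ∀ x y, G.Adj x y →
    T.dist r x + T.dist x y = T.dist r y ∨ T.dist r y + T.dist y x = T.dist r x

/-- `M` is a matching of `G` (a set of pairwise non-adjacent edges of `G`). -/
def IsMatching {V : Type*} (G : SimpleGraph V) (M : Set (Sym2 V)) : Prop :=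
  M ⊆ G.edgeSet ∧ ∀ e ∈ M, ∀ f ∈ M, e ≠ f → ∀ v, ¬(v ∈ e ∧ v ∈ f)

/-- Every vertex of `G` has degree at most `d`. -/
def MaxDegreeLE {V : Type*} (G : SimpleGraph V) (d : ℕ) : Prop :=
  ∀ v : V, {u | G.Adj v u}.ncard ≤ d

/-- If `R` is a bipartite subgraph of `G` all of whose connected components are
induced subgraphs of `G`, then the maximum weight of a cut of `G` is at least
`(w(G) + w(R)) / 2`. -/
theorem maxcut_ge_of_B_subgraph {V : Type*} [Fintype V] (G R : SimpleGraph V)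
    (w : Sym2 V → ℝ) (hw : ∀ e, 0 ≤ w e) (hG : G.Connected)
    (hRG : R ≤ G)
    (hbip : ∃ B : Set V, ∀ x y, R.Adj x y → (x ∈ B ↔ y ∉ B))
    (hind : ∀ x y, G.Adj x y → R.Reachable x y → R.Adj x y) :
    ∃ A : Set V, (totalWeight G w + totalWeight R w) / 2 ≤ cutWeight G w A := by
  classical
  obtain ⟨B, hB⟩ := hbip
  haveI : Fintype R.ConnectedComponent := Fintype.ofFinite _
  let F := R.ConnectedComponent → Bool
  let A : F → Set V := fun ε => {v | v ∈ B ↔ ε (R.connectedComponentMk v) = true}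
  let P : F → Sym2 V → Prop := fun ε e => ∃ x y, e = s(x, y) ∧ x ∈ A ε ∧ y ∉ A ε
  have hE : G.edgeSet.Finite := Set.toFinite _
  have hR : R.edgeSet.Finite := Set.toFinite _
  set EFin := hE.toFinset with hEF
  set RFin := hR.toFinset with hRF
  have hmemA : ∀ (ε : F) v, v ∈ A ε ↔ (v ∈ B ↔ ε (R.connectedComponentMk v) = true) :=
    fun _ _ => Iff.rfl
  have hP : ∀ (ε : F) x y, P ε s(x, y) ↔ ¬ (x ∈ A ε ↔ y ∈ A ε) := by
    intro ε x y
    constructor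
    · rintro ⟨a, b, hab, ha, hb⟩
      rw [Sym2.eq_iff] at hab
      rcases hab with ⟨rfl, rfl⟩ | ⟨rfl, rfl⟩ <;> tauto
    · intro h
      by_cases hx : x ∈ A ε
      · exact ⟨x, y, rfl, hx, fun hy => h ⟨fun _ => hy, fun _ => hx⟩⟩
      · refine ⟨y, x, Sym2.eq_swap.symm, ?_, hx⟩
        by_contra hy
        exact h ⟨fun h' => absurd h' hx, fun h' => absurd h' hy⟩
  have cutEq : ∀ ε : F, cutWeight G w (A ε) = ∑ e ∈ EFin, if P ε e then w e else 0 := by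
    intro ε
    have hfin : {e ∈ G.edgeSet | ∃ x y, e = s(x, y) ∧ x ∈ A ε ∧ y ∉ A ε}.Finite :=
      hE.subset fun e he => he.1
    rw [cutWeight, finsum_mem_eq_finite_toFinset_sum _ hfin, ← Finset.sum_filter]
    apply Finset.sum_congr _ (fun _ _ => rfl)
    ext e
    simp only [Set.Finite.mem_toFinset, Set.mem_setOf_eq, Finset.mem_filter, hEF]
    exact Iff.rfl
  let N : Sym2 V → ℕ := fun e => (Finset.univ.filter fun ε : F => P ε e).card
  have hsum : ∑ ε : F, cutWeight G w (A ε) = ∑ e ∈ EFin, (N e : ℝ) * w e := by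
    simp only [cutEq]
    rw [Finset.sum_comm]
    refine Finset.sum_congr rfl fun e he => ?_
    rw [← Finset.sum_filter, Finset.sum_const, nsmul_eq_mul]
  have hNR : ∀ e ∈ RFin, N e = Fintype.card F := by
    intro e
    induction e using Sym2.ind with
    | _ x y =>
      intro he
      rw [hRF, Set.Finite.mem_toFinset, SimpleGraph.mem_edgeSet] at he
      have hcc : R.connectedComponentMk x = R.connectedComponentMk y :=
        SimpleGraph.ConnectedComponent.sound he.reachable
      have hall : ∀ ε : F, P ε s(x, y) := by
        intro ε
        rw [hP]
        have hxy := hB x y he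
        simp only [hmemA, hcc]
        tauto
      simp only [N, Finset.filter_true_of_mem (fun ε _ => hall ε), Finset.card_univ]
  have hNX : ∀ e ∈ EFin \ RFin, 2 * N e = Fintype.card F := by
    intro e
    induction e using Sym2.ind with
    | _ x y =>
      intro he
      rw [Finset.mem_sdiff, hEF, hRF, Set.Finite.mem_toFinset, Set.Finite.mem_toFinset,
        SimpleGraph.mem_edgeSet, SimpleGraph.mem_edgeSet] at he
      have hnReach : ¬ R.Reachable x y := fun h => he.2 (hind x y he.1 h)
      have hcc : R.connectedComponentMk x ≠ R.connectedComponentMk y := fun h =>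
        hnReach (SimpleGraph.ConnectedComponent.eq.mp h)
      let flip : F → F := fun ε =>
        Function.update ε (R.connectedComponentMk y) (!(ε (R.connectedComponentMk y)))
      have hflipx : ∀ ε : F, x ∈ A (flip ε) ↔ x ∈ A ε := by
        intro ε
        simp only [hmemA, flip, Function.update_of_ne hcc]
      have hflipy : ∀ ε : F, y ∈ A (flip ε) ↔ ¬ (y ∈ A ε) := by
        intro ε
        simp only [hmemA, flip, Function.update_self]
        cases ε (R.connectedComponentMk y) <;> simp
      have hflipP : ∀ ε : F, P (flip ε) s(x, y) ↔ ¬ P ε s(x, y) := by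
        intro ε
        rw [hP, hP]
        have h1 := hflipx ε
        have h2 := hflipy ε
        tauto
      have hinv : ∀ ε : F, flip (flip ε) = ε := by
        intro ε
        funext c
        by_cases hc : c = R.connectedComponentMk y
        · subst hc
          simp [flip]
        · simp [flip, Function.update_of_ne hc]
      have hcardeq : (Finset.univ.filter fun ε : F => P ε s(x, y)).card =
          (Finset.univ.filter fun ε : F => ¬ P ε s(x, y)).card := by
        apply Finset.card_bij' (fun ε _ => flip ε) (fun ε _ => flip ε)
        · intro ε hε
          simp only [Finset.mem_filter, Finset.mem_univ, true_and] at hε ⊢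
          rw [hflipP]
          exact fun h => h hε
        · intro ε hε
          simp only [Finset.mem_filter, Finset.mem_univ, true_and] at hε ⊢
          rw [← hinv ε] at hε
          rw [hflipP] at hε
          tauto
        · intro ε _
          exact hinv ε
        · intro ε _
          exact hinv ε
      have := Finset.card_filter_add_card_filter_not
        (s := (Finset.univ : Finset F)) (p := fun ε => P ε s(x, y))
      simp only [Finset.card_univ] at this
      show 2 * (Finset.univ.filter fun ε : F => P ε s(x, y)).card = Fintype.card F
      omega
  have hRsubE : RFin ⊆ EFin := by
    intro e he
    rw [hRF, Set.Finite.mem_toFinset] at he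
    rw [hEF, Set.Finite.mem_toFinset]
    exact SimpleGraph.edgeSet_mono hRG he
  have hTG : totalWeight G w = ∑ e ∈ EFin, w e := by
    rw [totalWeight, finsum_mem_eq_finite_toFinset_sum _ hE]
  have hTR : totalWeight R w = ∑ e ∈ RFin, w e := by
    rw [totalWeight, finsum_mem_eq_finite_toFinset_sum _ hR]
  have hsplit : ∑ e ∈ EFin, (N e : ℝ) * w e =
      (Fintype.card F : ℝ) * (∑ e ∈ RFin, w e) +
        ((Fintype.card F : ℝ) / 2) * ((∑ e ∈ EFin, w e) - ∑ e ∈ RFin, w e) := by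
    rw [← Finset.sum_sdiff hRsubE]
    have h1 : ∑ e ∈ RFin, (N e : ℝ) * w e = (Fintype.card F : ℝ) * ∑ e ∈ RFin, w e := by
      rw [Finset.mul_sum]
      exact Finset.sum_congr rfl fun e he => by rw [hNR e he]
    have h2 : ∑ e ∈ EFin \ RFin, (N e : ℝ) * w e =
        ((Fintype.card F : ℝ) / 2) * ∑ e ∈ EFin \ RFin, w e := by
      rw [Finset.mul_sum]
      refine Finset.sum_congr rfl fun e he => ?_
      have h := hNX e he
      have h' : (2 : ℝ) * (N e : ℝ) = (Fintype.card F : ℝ) := by exact_mod_cast congrArg (Nat.cast (R := ℝ)) h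
      rw [show ((Fintype.card F : ℝ) / 2) = (N e : ℝ) by linarith]
    rw [h1, h2, Finset.sum_sdiff_eq_sub hRsubE]
    ring
  have hcardpos : 0 < (Fintype.card F : ℝ) := by
    exact_mod_cast Fintype.card_pos
  have hkey : ∑ _ε : F, (totalWeight G w + totalWeight R w) / 2 ≤
      ∑ ε : F, cutWeight G w (A ε) := by
    rw [hsum, hsplit, Finset.sum_const, Finset.card_univ, nsmul_eq_mul, hTG, hTR]
    ring_nf
    exact le_refl _
  obtain ⟨ε, _, hε⟩ := Finset.exists_le_of_sum_le Finset.univ_nonempty hkey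
  exact ⟨A ε, hε⟩


end MaxCut
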